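/- The normalized Black-Scholes function C satisfies the forward Black-Scholes partial differential equation: for every x ∈ ℝ and every w > 0, ∂C/∂w (x,w) − (1/2) ∂²C/∂x² (x,w) + (1/2) ∂C/∂x (x,w) = 0. -/

import Mathlib

open MeasureTheory Real

/-- The standard normal cumulative distribution function. -/
noncomputable def stdNormalCDF (z : ℝ) : ℝ :=
  ∫ u in Set.Iic z, (Real.sqrt (2 * Real.pi))⁻¹ * Real.exp (-u ^ 2 / 2)

/-- The normalized Black-Scholes function `C(x,w) = e^x N(d₁) - N(d₂)`. -/
noncomputable def bsC (x w : ℝ) : ℝ :=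
  Real.exp x * stdNormalCDF (x / Real.sqrt w + Real.sqrt w / 2)
    - stdNormalCDF (x / Real.sqrt w + Real.sqrt w / 2 - Real.sqrt w)

noncomputable def phi (u : ℝ) : ℝ := (Real.sqrt (2 * Real.pi))⁻¹ * Real.exp (-u ^ 2 / 2)

lemma phi_continuous : Continuous phi := by
  unfold phi; fun_prop

lemma phi_integrable : Integrable phi := by
  have h : Integrable (fun u : ℝ => Real.exp (-(1/2 : ℝ) * u ^ 2)) :=
    integrable_exp_neg_mul_sq (by norm_num)
  have := h.const_mul (Real.sqrt (2 * Real.pi))⁻¹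
  refine this.congr ?_
  filter_upwards with u
  unfold phi
  ring_nf

lemma stdNormalCDF_eq (y : ℝ) :
    stdNormalCDF y = stdNormalCDF 0 + ∫ u in (0:ℝ)..y, phi u := by
  have h := intervalIntegral.integral_Iic_sub_Iic (phi_integrable.integrableOn)
    (phi_integrable.integrableOn) (a := 0) (b := y)
  unfold stdNormalCDF
  simp only [phi] at h ⊢
  linarith [h]

lemma hasDerivAt_stdNormalCDF (z : ℝ) : HasDerivAt stdNormalCDF (phi z) z := by
  have h : HasDerivAt (fun y => stdNormalCDF 0 + ∫ u in (0:ℝ)..y, phi u) (phi z) z := by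
    refine (HasDerivAt.const_add _ ?_)
    exact intervalIntegral.integral_hasDerivAt_right
      (phi_integrable.intervalIntegrable)
      (phi_continuous.stronglyMeasurableAtFilter _ _)
      phi_continuous.continuousAt
  exact h.congr_of_eventuallyEq (Filter.Eventually.of_forall fun y => (stdNormalCDF_eq y))

lemma key_id (x s : ℝ) (hs : s ≠ 0) :
    Real.exp x * phi (x / s + s / 2) = phi (x / s + s / 2 - s) := by
  unfold phi
  rw [mul_comm (Real.exp x), mul_assoc, ← Real.exp_add]
  congr 1
  field_simp
  ring

lemma hasDerivAt_bsC_x (w : ℝ) (hw : 0 < w) (x : ℝ) :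
    HasDerivAt (fun x' => bsC x' w)
      (Real.exp x * stdNormalCDF (x / Real.sqrt w + Real.sqrt w / 2)) x := by
  set s := Real.sqrt w with hs_def
  have hs : s ≠ 0 := (Real.sqrt_pos.mpr hw).ne'
  have h1 : HasDerivAt (fun x' : ℝ => x' / s + s / 2) (1 / s) x := by
    simpa using ((hasDerivAt_id x).div_const s).add_const (s / 2)
  have h2 : HasDerivAt (fun x' : ℝ => x' / s + s / 2 - s) (1 / s) x := h1.sub_const s
  have hN1 := (hasDerivAt_stdNormalCDF (x / s + s / 2)).comp x h1
  have hN2 := (hasDerivAt_stdNormalCDF (x / s + s / 2 - s)).comp x h2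
  have hE := Real.hasDerivAt_exp x
  have htot := (hE.mul hN1).sub hN2
  have hkey := key_id x s hs
  refine htot.congr_deriv ?_
  rw [← hkey]
  simp only [Function.comp_apply]
  ring

lemma deriv_bsC_x (w : ℝ) (hw : 0 < w) (x : ℝ) :
    deriv (fun x' => bsC x' w) x
      = Real.exp x * stdNormalCDF (x / Real.sqrt w + Real.sqrt w / 2) :=
  (hasDerivAt_bsC_x w hw x).deriv

lemma hasDerivAt_bsC_xx (w : ℝ) (hw : 0 < w) (x : ℝ) :
    HasDerivAt (fun x' => deriv (fun x'' => bsC x'' w) x')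
      (Real.exp x * stdNormalCDF (x / Real.sqrt w + Real.sqrt w / 2)
        + Real.exp x * phi (x / Real.sqrt w + Real.sqrt w / 2) / Real.sqrt w) x := by
  set s := Real.sqrt w with hs_def
  have hs : s ≠ 0 := (Real.sqrt_pos.mpr hw).ne'
  have h1 : HasDerivAt (fun x' : ℝ => x' / s + s / 2) (1 / s) x := by
    simpa using ((hasDerivAt_id x).div_const s).add_const (s / 2)
  have hN1 := (hasDerivAt_stdNormalCDF (x / s + s / 2)).comp x h1
  have hE := Real.hasDerivAt_exp x
  have htot := hE.mul hN1
  have heq : (fun x' => deriv (fun x'' => bsC x'' w) x')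
      = fun x' => Real.exp x' * stdNormalCDF (x' / s + s / 2) := by
    funext x'; exact deriv_bsC_x w hw x'
  rw [heq]
  refine htot.congr_deriv ?_
  simp only [Function.comp_apply]
  ring

lemma hasDerivAt_bsC_w (x w : ℝ) (hw : 0 < w) :
    HasDerivAt (fun w' => bsC x w')
      (phi (x / Real.sqrt w + Real.sqrt w / 2 - Real.sqrt w) / (2 * Real.sqrt w)) w := by
  set s := Real.sqrt w with hs_def
  have hspos : 0 < s := Real.sqrt_pos.mpr hw
  have hs : s ≠ 0 := hspos.ne'
  have hsqrt : HasDerivAt Real.sqrt (1 / (2 * s)) w := by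
    simpa using Real.hasDerivAt_sqrt hw.ne'
  have hinv : HasDerivAt (fun w' : ℝ => x / Real.sqrt w')
      (x * (-(1 / (2 * s)) / s ^ 2)) w := by
    have := (hsqrt.inv hs).const_mul x
    refine this.congr_of_eventuallyEq ?_
    filter_upwards with w'
    rw [div_eq_mul_inv]
    rfl
  have hd1 : HasDerivAt (fun w' : ℝ => x / Real.sqrt w' + Real.sqrt w' / 2)
      (x * (-(1 / (2 * s)) / s ^ 2) + (1 / (2 * s)) / 2) w :=
    hinv.add (hsqrt.div_const 2)
  have hd2 : HasDerivAt (fun w' : ℝ => x / Real.sqrt w' + Real.sqrt w' / 2 - Real.sqrt w')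
      (x * (-(1 / (2 * s)) / s ^ 2) + (1 / (2 * s)) / 2 - 1 / (2 * s)) w :=
    hd1.sub hsqrt
  have hN1 := (hasDerivAt_stdNormalCDF (x / s + s / 2)).comp w hd1
  have hN2 := (hasDerivAt_stdNormalCDF (x / s + s / 2 - s)).comp w hd2
  have htot := (hN1.const_mul (Real.exp x)).sub hN2
  have hkey := key_id x s hs
  refine htot.congr_deriv ?_
  rw [← hkey]
  have hs2 : s ^ 2 = w := Real.sq_sqrt hw.le
  ring

theorem bsC_satisfies_forward_BS_PDE (x w : ℝ) (hw : 0 < w) :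
    deriv (fun w' => bsC x w') w
      - (1 / 2) * deriv (fun x' => deriv (fun x'' => bsC x'' w) x') x
      + (1 / 2) * deriv (fun x' => bsC x' w) x = 0 := by
  set s := Real.sqrt w with hs_def
  have hs : s ≠ 0 := (Real.sqrt_pos.mpr hw).ne'
  rw [(hasDerivAt_bsC_w x w hw).deriv, (hasDerivAt_bsC_xx w hw x).deriv,
    deriv_bsC_x w hw x]
  rw [← key_id x s hs]
  simp only [hs_def]
  ring
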